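/- Let E_m ~ Exp(m²) be independent for m ≥ 1 and T = ∑_{m≥1} E_m. Then for all n ≥ 1, P(T > 4·log n) ≤ e²/n². -/

import Mathlib

open MeasureTheory ProbabilityTheory Real Set
open scoped ENNReal

lemma exp_lintegral_expMeasure {r t : ℝ} (ht : 0 ≤ t) (hrt : t < r) :
    ∫⁻ x, ENNReal.ofReal (rexp (t * x)) ∂(expMeasure r) = ENNReal.ofReal (r / (r - t)) := by
  have hr : 0 < r := ht.trans_lt hrt
  have hb : 0 < r - t := by linarith
  have hpdf : expMeasure r = volume.withDensity (exponentialPDF r) := rfl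
  rw [hpdf, lintegral_withDensity_eq_lintegral_mul _
      (by exact (measurable_exponentialPDFReal r).ennreal_ofReal)
      (by fun_prop)]
  have hsplit : (∫⁻ x, (exponentialPDF r * fun x => ENNReal.ofReal (rexp (t * x))) x) =
      ∫⁻ x in Ici (0:ℝ), (exponentialPDF r * fun x => ENNReal.ofReal (rexp (t * x))) x := by
    rw [← lintegral_add_compl _ (measurableSet_Ici (a := (0:ℝ))), compl_Ici]
    have h0 : ∫⁻ x in Iio (0:ℝ), (exponentialPDF r * fun x => ENNReal.ofReal (rexp (t * x))) x
        = ∫⁻ _x in Iio (0:ℝ), (0:ℝ≥0∞) := setLIntegral_congr_fun measurableSet_Iio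
      (fun x (hx : x < 0) => by simp [exponentialPDF_of_neg hx])
    rw [h0, lintegral_zero, add_zero]
  rw [hsplit]
  have heq : ∀ x ∈ Ici (0:ℝ),
      (exponentialPDF r * fun x => ENNReal.ofReal (rexp (t * x))) x
        = ENNReal.ofReal (r * rexp (-((r - t) * x))) := by
    intro x hx
    rw [Pi.mul_apply, exponentialPDF_of_nonneg hx, ← ENNReal.ofReal_mul (by positivity)]
    congr 1
    rw [mul_assoc, ← Real.exp_add]
    ring_nf
  rw [setLIntegral_congr_fun measurableSet_Ici heq]
  have hInt : IntegrableOn (fun x => r * rexp (-((r - t) * x))) (Ici (0:ℝ)) := by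
    rw [integrableOn_Ici_iff_integrableOn_Ioi]
    have := (exp_neg_integrableOn_Ioi 0 hb).const_mul r
    simpa only [neg_mul, IntegrableOn] using this
  rw [← ofReal_integral_eq_lintegral_ofReal hInt (ae_of_all _ (fun x => by positivity))]
  congr 1
  rw [integral_Ici_eq_integral_Ioi, MeasureTheory.integral_const_mul]
  have : ∫ x in Ioi (0:ℝ), rexp (-((r - t) * x)) = (r - t)⁻¹ := by
    have := integral_comp_mul_left_Ioi (fun x => rexp (-x)) 0 hb
    simp only [mul_zero, integral_exp_neg_Ioi, neg_zero, Real.exp_zero, smul_eq_mul, mul_one]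
      at this
    rw [this]
  rw [this]
  field_simp

lemma integrable_exp_expMeasure {r t : ℝ} (ht : 0 ≤ t) (hrt : t < r) :
    Integrable (fun x => rexp (t * x)) (expMeasure r) := by
  refine ⟨(by fun_prop : Measurable fun x => rexp (t * x)).aestronglyMeasurable, ?_⟩
  have h : ∀ x : ℝ, ‖rexp (t * x)‖ₑ = ENNReal.ofReal (rexp (t * x)) := fun x =>
    Real.enorm_eq_ofReal (exp_pos _).le
  simpa [HasFiniteIntegral, h, exp_lintegral_expMeasure ht hrt] using ENNReal.ofReal_lt_top

lemma integral_exp_expMeasure {r t : ℝ} (ht : 0 ≤ t) (hrt : t < r) :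
    ∫ x, rexp (t * x) ∂(expMeasure r) = r / (r - t) := by
  have hr : 0 < r := ht.trans_lt hrt
  have hb : 0 < r - t := by linarith
  rw [integral_eq_lintegral_of_nonneg_ae (ae_of_all _ fun x => (exp_pos _).le)
    (by fun_prop : Measurable fun x => rexp (t * x)).aestronglyMeasurable,
    exp_lintegral_expMeasure ht hrt, ENNReal.toReal_ofReal (by positivity)]

lemma sum_inv_sq_le (N : ℕ) : ∑ m ∈ Finset.range N, (((m:ℝ)+1)^2)⁻¹ ≤ 2 := by
  have key : ∀ K : ℕ, ∑ m ∈ Finset.range (K+1), (((m:ℝ)+1)^2)⁻¹ ≤ 2 - ((K:ℝ)+1)⁻¹ := by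
    intro K
    induction K with
    | zero => norm_num
    | succ K ih =>
      rw [Finset.sum_range_succ]
      have h1 : (0:ℝ) < (K:ℝ) + 1 := by positivity
      have h2 : (0:ℝ) < (K:ℝ) + 2 := by positivity
      have e1 : ((K:ℝ)+1)⁻¹ - ((K:ℝ)+2)⁻¹ = (((K:ℝ)+1) * ((K:ℝ)+2))⁻¹ := by
        field_simp
        ring
      have e2 : ((((K:ℕ):ℝ)+1+1)^2)⁻¹ ≤ (((K:ℝ)+1) * ((K:ℝ)+2))⁻¹ := by
        push_cast
        apply inv_anti₀ (by positivity)
        nlinarith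
      have e4 : ((K:ℝ)+1+1)⁻¹ = ((K:ℝ)+2)⁻¹ := by ring_nf
      have e5 : ((((K:ℝ)+1+1))^2)⁻¹ = (((K:ℝ)+2)^2)⁻¹ := by ring_nf
      push_cast
      push_cast at ih
      linarith [e2, e1, ih, e4, e5]
  cases N with
  | zero => simp
  | succ K =>
    have := key K
    have h1 : (0:ℝ) < (K:ℝ) + 1 := by positivity
    have : ((K:ℝ)+1)⁻¹ > 0 := by positivity
    linarith [key K]

theorem tail_sum_exponentials
    {Ω : Type*} [MeasurableSpace Ω] (μ : Measure Ω) [IsProbabilityMeasure μ]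
    (E : ℕ → Ω → ℝ) (hmeas : ∀ m, Measurable (E m))
    (hdist : ∀ m : ℕ, μ.map (E m) = expMeasure (((m : ℝ) + 1) ^ 2))
    (hindep : iIndepFun E μ)
    (n : ℕ) (hn : 1 ≤ n) :
    μ {ω | 4 * Real.log n < ∑' m : ℕ, E m ω} ≤
      ENNReal.ofReal (Real.exp 2 / n ^ 2) := by
  set a : ℝ := 4 * Real.log n with ha_def
  have hn1 : (1:ℝ) ≤ (n:ℝ) := by exact_mod_cast hn
  have hnpos : (0:ℝ) < (n:ℝ) := by linarith
  have ha : 0 ≤ a := mul_nonneg (by norm_num) (Real.log_nonneg hn1)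
  have hr1 : ∀ m : ℕ, (1:ℝ) ≤ ((m:ℝ)+1)^2 := by
    intro m
    nlinarith [Nat.cast_nonneg (α := ℝ) m]
  have hhalf : ∀ m : ℕ, (1:ℝ)/2 < ((m:ℝ)+1)^2 := fun m => lt_of_lt_of_le (by norm_num) (hr1 m)
  -- integrability of exp((1/2) E m)
  have hint : ∀ m : ℕ, Integrable (fun ω => rexp ((1/2) * E m ω)) μ := by
    intro m
    have h2 : Integrable (fun x => rexp ((1/2:ℝ) * x)) (μ.map (E m)) := by
      rw [hdist m]
      exact integrable_exp_expMeasure (by norm_num) (hhalf m)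
    exact (integrable_map_measure
      ((by fun_prop : Measurable fun x => rexp ((1/2:ℝ) * x)).aestronglyMeasurable)
      (hmeas m).aemeasurable).mp h2
  -- mgf of each E m
  have hmgf : ∀ m : ℕ, mgf (E m) μ (1/2) = ((m:ℝ)+1)^2 / (((m:ℝ)+1)^2 - 1/2) := by
    intro m
    have h := integral_map (μ := μ) (hmeas m).aemeasurable
      ((by fun_prop : Measurable fun x => rexp ((1/2:ℝ) * x)).aestronglyMeasurable
        (μ := μ.map (E m)))
    rw [mgf, ← h, hdist m, integral_exp_expMeasure (by norm_num) (hhalf m)]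
  -- product bound
  have hprodle : ∀ N : ℕ, mgf (∑ i ∈ Finset.range N, E i) μ (1/2) ≤ rexp 2 := by
    intro N
    rw [hindep.mgf_sum hmeas]
    calc ∏ i ∈ Finset.range N, mgf (E i) μ (1/2)
        ≤ ∏ i ∈ Finset.range N, rexp ((((i:ℝ)+1)^2)⁻¹) := by
          apply Finset.prod_le_prod
          · intro i _
            rw [hmgf i]
            have h2 : (0:ℝ) < ((i:ℝ)+1)^2 - 1/2 := by nlinarith [hr1 i]
            positivity
          · intro i _
            rw [hmgf i]
            have h1 : (1:ℝ) ≤ ((i:ℝ)+1)^2 := hr1 i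
            have h2 : (0:ℝ) < ((i:ℝ)+1)^2 - 1/2 := by linarith
            have hpos : (0:ℝ) < ((i:ℝ)+1)^2 := by linarith
            have hv0 : (0:ℝ) ≤ (((i:ℝ)+1)^2)⁻¹ := by positivity
            have hinv : (((i:ℝ)+1)^2)⁻¹ * ((i:ℝ)+1)^2 = 1 := inv_mul_cancel₀ (ne_of_gt hpos)
            have h3 : ((i:ℝ)+1)^2 / (((i:ℝ)+1)^2 - 1/2) ≤ 1 + (((i:ℝ)+1)^2)⁻¹ := by
              rw [div_le_iff₀ h2]
              nlinarith [hinv, hv0, h1, mul_nonneg hv0 (sub_nonneg.mpr h1)]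
            exact h3.trans (by linarith [Real.add_one_le_exp ((((i:ℝ)+1)^2)⁻¹)])
      _ = rexp (∑ i ∈ Finset.range N, (((i:ℝ)+1)^2)⁻¹) := by rw [Real.exp_sum]
      _ ≤ rexp 2 := Real.exp_le_exp.mpr (sum_inv_sq_le N)
  -- Markov bound for partial sums
  have hmarkov : ∀ N : ℕ, μ {ω | a < (∑ i ∈ Finset.range N, E i) ω}
      ≤ ENNReal.ofReal (rexp 2 / n ^ 2) := by
    intro N
    have hIntS := hindep.integrable_exp_mul_sum hmeas (s := Finset.range N)
      (fun i _ => hint i)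
    have h := measure_ge_le_exp_mul_mgf (μ := μ) (X := ∑ i ∈ Finset.range N, E i)
      (t := 1/2) a (by norm_num) hIntS
    have hexp : rexp (-(1/2) * a) = ((n:ℝ)^2)⁻¹ := by
      rw [ha_def]
      have : -(1/2) * (4 * Real.log n) = -(2 * Real.log n) := by ring
      rw [this, Real.exp_neg, two_mul, Real.exp_add, Real.exp_log hnpos]
      ring_nf
    have hle : (μ {ω | a ≤ (∑ i ∈ Finset.range N, E i) ω}).toReal ≤ rexp 2 / n ^ 2 := by
      calc (μ {ω | a ≤ (∑ i ∈ Finset.range N, E i) ω}).toReal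
          ≤ rexp (-(1/2) * a) * mgf (∑ i ∈ Finset.range N, E i) μ (1/2) := h
        _ ≤ ((n:ℝ)^2)⁻¹ * rexp 2 := by
            rw [hexp]
            have := hprodle N
            have h0 : (0:ℝ) ≤ ((n:ℝ)^2)⁻¹ := by positivity
            exact mul_le_mul_of_nonneg_left this h0
        _ = rexp 2 / n ^ 2 := by ring
    calc μ {ω | a < (∑ i ∈ Finset.range N, E i) ω}
        ≤ μ {ω | a ≤ (∑ i ∈ Finset.range N, E i) ω} := by
          apply measure_mono
          intro ω hω
          simp only [mem_setOf_eq] at hω ⊢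
          exact le_of_lt hω
      _ ≤ ENNReal.ofReal (rexp 2 / n ^ 2) := by
          rw [← ENNReal.ofReal_toReal (measure_ne_top μ _)]
          exact ENNReal.ofReal_le_ofReal hle
  -- limit argument
  set B : ℕ → Set Ω := fun N => ⋂ M, ⋂ (_ : N ≤ M), {ω | a < (∑ i ∈ Finset.range M, E i) ω}
    with hB_def
  have hsub : {ω | a < ∑' m : ℕ, E m ω} ⊆ ⋃ N, B N := by
    intro ω hω
    simp only [mem_setOf_eq] at hω
    have hsum : Summable fun m => E m ω := by
      by_contra h
      rw [tsum_eq_zero_of_not_summable h] at hω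
      linarith
    have htends := hsum.hasSum.tendsto_sum_nat
    have hev : ∀ᶠ M in Filter.atTop, a < ∑ i ∈ Finset.range M, E i ω :=
      htends.eventually (eventually_gt_nhds hω)
    obtain ⟨N, hN⟩ := Filter.eventually_atTop.mp hev
    refine mem_iUnion.mpr ⟨N, ?_⟩
    simp only [hB_def, mem_iInter, mem_setOf_eq]
    intro M hM
    simpa using hN M hM
  have hmono : Monotone B := by
    intro N N' hNN'
    intro ω hω
    simp only [hB_def, mem_iInter] at hω ⊢
    intro M hM
    exact hω M (hNN'.trans hM)
  calc μ {ω | a < ∑' m : ℕ, E m ω} ≤ μ (⋃ N, B N) := measure_mono hsub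
    _ = ⨆ N, μ (B N) := hmono.directed_le.measure_iUnion
    _ ≤ ENNReal.ofReal (rexp 2 / n ^ 2) := by
        refine iSup_le fun N => ?_
        refine le_trans (measure_mono ?_) (hmarkov N)
        intro ω hω
        simp only [hB_def, mem_iInter] at hω
        exact hω N le_rfl
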